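/- Let 𝕜 be an RCLike field (ℝ or ℂ), let n ≥ 1, let V : Fin n → Submodule 𝕜 (EuclideanSpace 𝕜 (Fin 2)) be pairwise generic, and let F : (Fin n → Fin n) → Bool be any function. Then there exists a quantum-logic term t in n + n variables such that for every k : Fin n → Fin n, eval t (Fin.append V (V ∘ k)) = ⊤ if F k = true and eval t (Fin.append V (V ∘ k)) = ⊥ if F k = false. -/

import Mathlib

/-- A quantum-logic term in `n` variables. -/
inductive Term (n : ℕ) : Type
  | var : Fin n → Term n
  | neg : Term n → Term n
  | inf : Term n → Term n → Term n
  | sup : Term n → Term n → Term n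

/-- The value of a quantum-logic term under an assignment of subspaces
to the variables.  Negation is interpreted as orthogonal complement. -/
def Term.eval {n : ℕ} {𝕜 E : Type*} [RCLike 𝕜] [NormedAddCommGroup E]
    [InnerProductSpace 𝕜 E] : Term n → (Fin n → Submodule 𝕜 E) → Submodule 𝕜 E
  | .var i, U => U i
  | .neg t, U => (t.eval U)ᗮ
  | .inf s t, U => s.eval U ⊓ t.eval U
  | .sup s t, U => s.eval U ⊔ t.eval U

/-- A family of subspaces is pairwise generic. -/
def PairwiseGeneric {ι : Type*} {𝕜 E : Type*} [RCLike 𝕜] [NormedAddCommGroup E]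
    [InnerProductSpace 𝕜 E] (U : ι → Submodule 𝕜 E) : Prop :=
  (∀ i, U i ≠ ⊥ ∧ U i ≠ ⊤) ∧
  ∀ i j, i ≠ j →
    U i ⊓ U j = ⊥ ∧ U i ⊓ (U j)ᗮ = ⊥ ∧ (U i)ᗮ ⊓ (U j)ᗮ = ⊥

namespace QLAux

variable {𝕜 : Type*} [RCLike 𝕜]

lemma sup_eq_top_of_orth_inf {A B : Submodule 𝕜 (EuclideanSpace 𝕜 (Fin 2))}
    (h : Aᗮ ⊓ Bᗮ = ⊥) : A ⊔ B = ⊤ := by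
  rw [Submodule.inf_orthogonal] at h
  have := congrArg Submodule.orthogonal h
  rwa [Submodule.orthogonal_orthogonal, Submodule.bot_orthogonal_eq_top] at this

lemma sup_orth_eq_top_of_inf {A B : Submodule 𝕜 (EuclideanSpace 𝕜 (Fin 2))}
    (h : Aᗮ ⊓ B = ⊥) : A ⊔ Bᗮ = ⊤ := by
  apply sup_eq_top_of_orth_inf
  rwa [Submodule.orthogonal_orthogonal]

/-- Big disjunction of a list of terms (default value `⊥`). -/
def bigSup {m : ℕ} (v0 : Fin m) : List (Term m) → Term m
  | [] => .inf (.var v0) (.neg (.var v0))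
  | t :: l => .sup t (bigSup v0 l)

/-- Big conjunction of a list of terms (default value `⊤`). -/
def bigInf {m : ℕ} (v0 : Fin m) : List (Term m) → Term m
  | [] => .sup (.var v0) (.neg (.var v0))
  | t :: l => .inf t (bigInf v0 l)

variable {m : ℕ} {v0 : Fin m} {U : Fin m → Submodule 𝕜 (EuclideanSpace 𝕜 (Fin 2))}

lemma bigSup_eval_bot {L : List (Term m)}
    (h : ∀ t ∈ L, t.eval U = ⊥) : (bigSup v0 L).eval U = ⊥ := by
  induction L with
  | nil => simpa [bigSup, Term.eval] using Submodule.inf_orthogonal_eq_bot (U v0)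
  | cons t l ih =>
    simp only [bigSup, Term.eval, h t (by simp), ih fun s hs => h s (by simp [hs]),
      sup_bot_eq]

lemma bigSup_eval_top {L : List (Term m)} {t : Term m} (ht : t ∈ L)
    (h : t.eval U = ⊤) : (bigSup v0 L).eval U = ⊤ := by
  induction L with
  | nil => simp at ht
  | cons s l ih =>
    rcases List.mem_cons.1 ht with rfl | ht'
    · simp [bigSup, Term.eval, h]
    · simp [bigSup, Term.eval, ih ht']

lemma bigInf_eval_top {L : List (Term m)}
    (h : ∀ t ∈ L, t.eval U = ⊤) : (bigInf v0 L).eval U = ⊤ := by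
  induction L with
  | nil =>
    simpa [bigInf, Term.eval] using Submodule.sup_orthogonal_of_hasOrthogonalProjection (K := U v0)
  | cons t l ih =>
    simp only [bigInf, Term.eval, h t (by simp), ih fun s hs => h s (by simp [hs]),
      inf_top_eq]

lemma bigInf_eval_bot {L : List (Term m)} {t : Term m} (ht : t ∈ L)
    (h : t.eval U = ⊥) : (bigInf v0 L).eval U = ⊥ := by
  induction L with
  | nil => simp at ht
  | cons s l ih =>
    rcases List.mem_cons.1 ht with rfl | ht'
    · simp [bigInf, Term.eval, h]
    · simp [bigInf, Term.eval, ih ht']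

end QLAux

theorem exists_term_realizing_function {𝕜 : Type*} [RCLike 𝕜] {n : ℕ} (hn : 1 ≤ n)
    (V : Fin n → Submodule 𝕜 (EuclideanSpace 𝕜 (Fin 2)))
    (hV : PairwiseGeneric V) (F : (Fin n → Fin n) → Bool) :
    ∃ t : Term (n + n), ∀ k : Fin n → Fin n,
      (F k = true → t.eval (Fin.append V (V ∘ k)) = ⊤) ∧
      (F k = false → t.eval (Fin.append V (V ∘ k)) = ⊥) := by
  classical
  set A : (Fin n → Fin n) → Fin (n + n) → Submodule 𝕜 (EuclideanSpace 𝕜 (Fin 2)) :=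
    fun k => Fin.append V (V ∘ k) with hA
  have hv0 : 0 < n + n := by omega
  set v0 : Fin (n + n) := ⟨0, hv0⟩ with hv0'
  -- the basic indicator term: evaluates to ⊤ if `k j = i`, to `⊥` otherwise
  set Eij : Fin n → Fin n → Term (n + n) := fun i j =>
    if h : 1 < n then
      let i' : Fin n := if i = ⟨0, by omega⟩ then ⟨1, h⟩ else ⟨0, by omega⟩
      let s : Term (n + n) := .inf (.var (Fin.castAdd n i)) (.var (Fin.natAdd n j))
      let w : Term (n + n) := .var (Fin.castAdd n i')
      .inf (.sup s w) (.sup s (.neg w))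
    else .sup (.var v0) (.neg (.var v0)) with hEij
  have hEval : ∀ (i j : Fin n) (k : Fin n → Fin n),
      (Eij i j).eval (A k) = if k j = i then ⊤ else ⊥ := by
    intro i j k
    by_cases h : 1 < n
    · have hi' : (if i = (⟨0, by omega⟩ : Fin n) then (⟨1, h⟩ : Fin n) else ⟨0, by omega⟩) ≠ i := by
        split <;> simp_all [Fin.ext_iff] <;> omega
      set i' : Fin n := if i = (⟨0, by omega⟩ : Fin n) then (⟨1, h⟩ : Fin n) else ⟨0, by omega⟩
      have hEq : Eij i j = .inf (.sup (.inf (.var (Fin.castAdd n i)) (.var (Fin.natAdd n j)))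
          (.var (Fin.castAdd n i')))
          (.sup (.inf (.var (Fin.castAdd n i)) (.var (Fin.natAdd n j)))
          (.neg (.var (Fin.castAdd n i')))) := by
        simp only [hEij, dif_pos h]; rfl
      rw [hEq]
      have hleft : ∀ a : Fin n, A k (Fin.castAdd n a) = V a := by
        intro a; simp [hA, Fin.append_left]
      have hright : A k (Fin.natAdd n j) = V (k j) := by
        rw [hA]; exact Fin.append_right _ _ _
      simp only [Term.eval, hleft, hright]
      by_cases hkj : k j = i
      · rw [if_pos hkj, hkj, inf_idem]
        have h1 : V i ⊔ V i' = ⊤ :=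
          QLAux.sup_eq_top_of_orth_inf (hV.2 i i' (Ne.symm hi')).2.2
        have h2 : V i ⊔ (V i')ᗮ = ⊤ := by
          apply QLAux.sup_orth_eq_top_of_inf
          rw [inf_comm]
          exact (hV.2 i' i hi').2.1
        rw [h1, h2, inf_top_eq]
      · rw [if_neg hkj, (hV.2 i (k j) (fun hh => hkj hh.symm)).1, bot_sup_eq, bot_sup_eq]
        exact Submodule.inf_orthogonal_eq_bot (V i')
    · -- n = 1 : everything is forced, k j = i automatically
      have hn1 : n = 1 := by omega
      subst hn1
      have : k j = i := Subsingleton.elim _ _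
      rw [if_pos this]
      have hEq : Eij i j = .sup (.var v0) (.neg (.var v0)) := by
        simp only [hEij, dif_neg h]
      rw [hEq]
      simpa [Term.eval] using Submodule.sup_orthogonal_of_hasOrthogonalProjection (K := A k v0)
  -- the term recognizing a single function k₀
  set T : (Fin n → Fin n) → Term (n + n) := fun k₀ =>
    QLAux.bigInf v0 ((List.finRange n).map fun j => Eij (k₀ j) j) with hT
  have hTeval : ∀ k₀ k : Fin n → Fin n,
      (T k₀).eval (A k) = if k = k₀ then ⊤ else ⊥ := by
    intro k₀ k
    by_cases hk : k = k₀
    · subst hk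
      rw [if_pos rfl]
      apply QLAux.bigInf_eval_top
      intro t ht
      rcases List.mem_map.1 ht with ⟨j, _, rfl⟩
      rw [hEval, if_pos rfl]
    · rw [if_neg hk]
      obtain ⟨j, hj⟩ : ∃ j, k j ≠ k₀ j := by
        by_contra hc
        push_neg at hc
        exact hk (funext hc)
      apply QLAux.bigInf_eval_bot (t := Eij (k₀ j) j)
      · exact List.mem_map.2 ⟨j, List.mem_finRange j, rfl⟩
      · rw [hEval, if_neg hj]
  refine ⟨QLAux.bigSup v0 (((Finset.univ.filter fun k₀ => F k₀ = true)).toList.map T), ?_⟩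
  intro k
  constructor
  · intro hFk
    apply QLAux.bigSup_eval_top (t := T k)
    · exact List.mem_map.2 ⟨k, by simp [Finset.mem_toList, hFk], rfl⟩
    · rw [hTeval, if_pos rfl]
  · intro hFk
    apply QLAux.bigSup_eval_bot
    intro t ht
    rcases List.mem_map.1 ht with ⟨k₀, hk₀, rfl⟩
    have hk₀' : F k₀ = true := by simpa [Finset.mem_toList] using hk₀
    rw [hTeval, if_neg]
    rintro rfl
    rw [hFk] at hk₀'
    exact Bool.false_ne_true hk₀'
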